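/- Let (α, v) be a cocycle crossed action of a group G on a group U, let U ⋊_v G be the twisted semidirect product, let H ⊴ G be normal, and set H̄ := { (u⁻¹, n) ∈ U × G : n ∈ H and Ad(u) = α_n as automorphisms of U }. Then H̄ is a normal subgroup of U ⋊_v G, and moreover every element of the form (w, e) with w ∈ U commutes with every element of H̄. -/
import Mathlib


/-- `H̄ = {(u⁻¹,n) : n ∈ H, Ad(u) = α_n}` is a normal subgroup of `U ⋊_v G`,
and every element `(w,e)` with `w ∈ U` commutes with every element of `H̄`. -/
theorem stmt7 {G U : Type*} [Group G] [Group U]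
    (α : G → MulAut U) (v : G → G → U)
    (hα1 : α 1 = 1)
    (hv1 : ∀ h : G, v 1 h = 1) (hv2 : ∀ g : G, v g 1 = 1)
    (hAd : ∀ g h : G, ∀ x : U, α g (α h x) = v g h * α (g * h) x * (v g h)⁻¹)
    (hcoc : ∀ g h k : G, v g h * v (g * h) k = α g (v h k) * v g (h * k))
    (mul' : U × G → U × G → U × G)
    (hmul : ∀ a b : U × G, mul' a b = (a.1 * α a.2 b.1 * v a.2 b.2, a.2 * b.2))
    (H : Subgroup G) [H.Normal]
    (Hbar : Set (U × G))
    (hHbar : ∀ x : U × G, x ∈ Hbar ↔ x.2 ∈ H ∧ ∀ y : U, α x.2 y = x.1⁻¹ * y * x.1) :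
    (((1 : U), (1 : G)) ∈ Hbar) ∧
    (∀ x ∈ Hbar, ∀ y ∈ Hbar, mul' x y ∈ Hbar) ∧
    (∀ x ∈ Hbar, ∃ y ∈ Hbar,
      mul' x y = ((1 : U), (1 : G)) ∧ mul' y x = ((1 : U), (1 : G))) ∧
    (∀ a b : U × G, mul' a b = ((1 : U), (1 : G)) → mul' b a = ((1 : U), (1 : G)) →
      ∀ x ∈ Hbar, mul' (mul' a x) b ∈ Hbar) ∧
    (∀ w : U, ∀ x ∈ Hbar, mul' (w, (1 : G)) x = mul' x (w, (1 : G))) := by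
  -- Basic consequences of the axioms
  have key : ∀ g h : G, ∀ z : U, α (g*h) z = (v g h)⁻¹ * (α g (α h z)) * v g h := by
    intro g h z
    rw [hAd g h z]; group
  have key2 : ∀ g : G, ∀ z : U, α g (α g⁻¹ z) = v g g⁻¹ * z * (v g g⁻¹)⁻¹ := by
    intro g z
    have h := hAd g g⁻¹ z
    rw [mul_inv_cancel, hα1] at h
    simpa using h
  refine ⟨?_, ?_, ?_, ?_, ?_⟩
  · rw [hHbar]
    exact ⟨one_mem H, fun y => by rw [hα1]; simp⟩
  · -- closure under multiplication
    rintro ⟨a, n⟩ hx ⟨b, m⟩ hy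
    rw [hHbar] at hx hy
    obtain ⟨hn, ha⟩ := hx
    obtain ⟨hm, hb⟩ := hy
    rw [hmul, hHbar]
    refine ⟨mul_mem hn hm, fun z => ?_⟩
    show α (n * m) z = _
    rw [key n m z, hb z]
    simp only [map_mul, map_inv, ha]
    group
  · -- inverses
    rintro ⟨a, n⟩ hx
    rw [hHbar] at hx
    obtain ⟨hn, ha⟩ := hx
    have hc : v n n⁻¹ = a⁻¹ * v n⁻¹ n * a := by
      have h := hcoc n n⁻¹ n
      rw [mul_inv_cancel, inv_mul_cancel, hv1, hv2, mul_one, mul_one] at h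
      rw [h, ha]
    have hninv : ∀ z : U, α n⁻¹ z = v n⁻¹ n * a * z * a⁻¹ * (v n⁻¹ n)⁻¹ := by
      intro z
      have h := hAd n⁻¹ n (a * z * a⁻¹)
      rw [inv_mul_cancel, hα1, ha] at h
      have hz : a⁻¹ * (a * z * a⁻¹) * a = z := by group
      rw [hz] at h
      simp only [MulAut.one_apply] at h
      rw [h]; group
    refine ⟨((v n n⁻¹)⁻¹ * a⁻¹, n⁻¹), ?_, ?_, ?_⟩
    · rw [hHbar]
      refine ⟨inv_mem hn, fun z => ?_⟩
      show α n⁻¹ z = _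
      rw [hninv z, hc]
      group
    · rw [hmul]
      show (a * α n ((v n n⁻¹)⁻¹ * a⁻¹) * v n n⁻¹, n * n⁻¹) = _
      rw [ha]
      simp only [Prod.mk.injEq]
      constructor <;> group
    · rw [hmul]
      show ((v n n⁻¹)⁻¹ * a⁻¹ * α n⁻¹ a * v n⁻¹ n, n⁻¹ * n) = _
      rw [hninv a, hc]
      simp only [Prod.mk.injEq]
      constructor <;> group
  · -- conjugation-stability
    rintro ⟨p, g⟩ ⟨q, h⟩ hab hba ⟨u, n⟩ hx
    rw [hHbar] at hx
    obtain ⟨hn, hu⟩ := hx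
    rw [hmul] at hab
    simp only [Prod.mk.injEq] at hab
    obtain ⟨hab1, hab2⟩ := hab
    have hh : h = g⁻¹ := by
      have h2 : g⁻¹ * (g * h) = g⁻¹ * 1 := by rw [hab2]
      simpa using h2
    subst hh
    have e2 : α g q = p⁻¹ * (v g g⁻¹)⁻¹ :=
      calc α g q = p⁻¹ * (p * α g q * v g g⁻¹) * (v g g⁻¹)⁻¹ := by group
        _ = p⁻¹ * 1 * (v g g⁻¹)⁻¹ := by rw [hab1]
        _ = p⁻¹ * (v g g⁻¹)⁻¹ := by group
    rw [hmul, hmul, hHbar]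
    refine ⟨?_, fun z => ?_⟩
    · show g * n * g⁻¹ ∈ H
      exact (‹H.Normal› : H.Normal).conj_mem n hn g
    · show α (g * n * g⁻¹) z = _
      have e1 : α (g * n) q = (v g n)⁻¹ * (α g (u⁻¹ * q * u)) * v g n := by
        rw [key g n q, hu q]
      have e1 : α (g * n) q
          = (v g n)⁻¹ * ((α g u)⁻¹ * (p⁻¹ * (v g g⁻¹)⁻¹) * α g u) * v g n := by
        rw [key g n q, hu q]
        simp only [map_mul, map_inv, e2]
      have e3 : α (g * n * g⁻¹) z
          = (v (g*n) g⁻¹)⁻¹ * ((v g n)⁻¹ * ((α g u)⁻¹ * (v g g⁻¹ * z * (v g g⁻¹)⁻¹) * α g u)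
            * v g n) * v (g*n) g⁻¹ := by
        rw [key (g*n) g⁻¹ z, key g n (α g⁻¹ z), hu (α g⁻¹ z)]
        simp only [map_mul, map_inv, key2 g z]
      rw [e3, e1]
      group
  · -- central elements (w,1)
    rintro w ⟨u, n⟩ hx
    rw [hHbar] at hx
    obtain ⟨hn, hu⟩ := hx
    rw [hmul, hmul]
    simp only [Prod.mk.injEq, hα1, hv1, hv2, hu w, MulAut.one_apply]
    constructor <;> group
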